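/- Let xV, xF : ℤ × ℤ → (Fin 5 → ℝ) satisfy Q_M(xV(v), xF(f)) = 0 for every incident vertex–face pair (v, f), and suppose (x(d))₄ − (x(d))₃ ≠ 0 for every vertex and every face d. Define the stereographic projections bV(d) = ((xV(d))₀, (xV(d))₁, (xV(d))₂) / ((xV(d))₄ − (xV(d))₃) and likewise bF. Then (bV, bF) is an orthogonal binet: for every v ∈ ℤ × ℤ, ⟪bV(v+(1,0)) − bV(v), bF(v) − bF(v−(0,1))⟫ = 0 and ⟪bV(v+(0,1)) − bV(v), bF(v) − bF(v−(1,0))⟫ = 0. (Projections of polar binets with respect to the Möbius quadric are orthogonal binets.) -/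

import Mathlib

open scoped InnerProductSpace

def Incident (v f : ℤ × ℤ) : Prop :=
  v = f ∨ v = f + (1, 0) ∨ v = f + (0, 1) ∨ v = f + (1, 1)

def QM (x y : Fin 5 → ℝ) : ℝ :=
  x 0 * y 0 + x 1 * y 1 + x 2 * y 2 + x 3 * y 3 - x 4 * y 4

noncomputable def stereo (x : Fin 5 → ℝ) : EuclideanSpace ℝ (Fin 3) :=
  (x 4 - x 3)⁻¹ • (WithLp.equiv 2 (Fin 3 → ℝ)).symm ![x 0, x 1, x 2]

lemma key (a b f g : Fin 5 → ℝ)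
    (haf : QM a f = 0) (hag : QM a g = 0) (hbf : QM b f = 0) (hbg : QM b g = 0)
    (ha : a 4 - a 3 ≠ 0) (hb : b 4 - b 3 ≠ 0) (hf : f 4 - f 3 ≠ 0) (hg : g 4 - g 3 ≠ 0) :
    ⟪stereo a - stereo b, stereo f - stereo g⟫_ℝ = 0 := by
  unfold QM at *
  simp only [stereo, PiLp.inner_apply, PiLp.sub_apply, PiLp.smul_apply,
    WithLp.equiv_symm_apply, PiLp.toLp_apply, smul_eq_mul, RCLike.inner_apply, conj_trivial,
    Fin.sum_univ_three, Matrix.cons_val_zero, Matrix.cons_val_one, Matrix.head_cons,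
    Matrix.cons_val_two, Matrix.tail_cons]
  field_simp
  linear_combination ((b 4 - b 3) * (g 4 - g 3)) * haf - ((b 4 - b 3) * (f 4 - f 3)) * hag
    - ((a 4 - a 3) * (g 4 - g 3)) * hbf + ((a 4 - a 3) * (f 4 - f 3)) * hbg

theorem stmt_2 (xV xF : ℤ × ℤ → Fin 5 → ℝ)
    (hpolar : ∀ v f : ℤ × ℤ, Incident v f → QM (xV v) (xF f) = 0)
    (hV : ∀ d : ℤ × ℤ, xV d 4 - xV d 3 ≠ 0) (hF : ∀ d : ℤ × ℤ, xF d 4 - xF d 3 ≠ 0) :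
    ∀ v : ℤ × ℤ,
      ⟪stereo (xV (v + (1, 0))) - stereo (xV v),
        stereo (xF v) - stereo (xF (v - (0, 1)))⟫_ℝ = 0 ∧
      ⟪stereo (xV (v + (0, 1))) - stereo (xV v),
        stereo (xF v) - stereo (xF (v - (1, 0)))⟫_ℝ = 0 := by
  intro v
  constructor
  · exact key _ _ _ _
      (hpolar _ _ (by simp [Incident, Prod.ext_iff]))
      (hpolar _ _ (by simp [Incident, Prod.ext_iff]))
      (hpolar _ _ (Or.inl rfl))
      (hpolar _ _ (by simp [Incident, Prod.ext_iff]))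
      (hV _) (hV _) (hF _) (hF _)
  · exact key _ _ _ _
      (hpolar _ _ (by right; right; left; rfl))
      (hpolar _ _ (by simp [Incident, Prod.ext_iff]))
      (hpolar _ _ (Or.inl rfl))
      (hpolar _ _ (by simp [Incident, Prod.ext_iff]))
      (hV _) (hV _) (hF _) (hF _)
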